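/- arXiv:2503.09440 — 2 statements merged into one kernel-verified Lean document; each statement's English description precedes it below -/
import Mathlib

section
/- Let {T(v)} be a tree representation of a finite simple graph G in which every subtree T(v) is a downward path in the host tree. Then every enumeration v₁,…,vₙ of the vertices with d(𝐯₁) ≥ d(𝐯₂) ≥ … ≥ d(𝐯ₙ) is a strong elimination order of G. -/
/-- A host tree: a finite tree (connected acyclic simple graph on a nonempty
finite node set) with a distinguished root and positive real edge weights. -/
structure HostTree where
  V : Type
  [fintypeV : Fintype V]
  [nonemptyV : Nonempty V]
  G : SimpleGraph V
  isTree : G.IsTree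
  root : V
  w : V → V → ℝ
  w_symm : ∀ x y : V, w x y = w y x
  w_pos : ∀ x y : V, G.Adj x y → 0 < w x y

attribute [instance] HostTree.fintypeV HostTree.nonemptyV

/-- The unique path in the host tree from the root to a node. -/
noncomputable def HostTree.rootPath (T : HostTree) (x : T.V) : T.G.Walk T.root x :=
  (T.isTree.existsUnique_path T.root x).choose

/-- The depth of a node: the sum of the weights of the edges on the unique
path from the root to the node. -/
noncomputable def HostTree.depth (T : HostTree) (x : T.V) : ℝ :=
  ((T.rootPath x).darts.map (fun d => T.w d.toProd.1 d.toProd.2)).sum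

/-- A subtree of the host tree: a nonempty set of nodes inducing a connected
subgraph. -/
def HostTree.IsSubtree (T : HostTree) (S : Set T.V) : Prop :=
  S.Nonempty ∧ (T.G.induce S).Connected

/-- `S₁` overshadows `S₂`: every node of `S₂ \ S₁` has strictly greater depth
than every node of `S₂ ∩ S₁`. -/
def HostTree.Overshadows (T : HostTree) (S₁ S₂ : Set T.V) : Prop :=
  ∀ x ∈ S₂ \ S₁, ∀ y ∈ S₂ ∩ S₁, T.depth y < T.depth x

/-- Two subtrees are compatible if one overshadows the other. -/
def HostTree.CompatiblePair (T : HostTree) (S₁ S₂ : Set T.V) : Prop :=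
  T.Overshadows S₁ S₂ ∨ T.Overshadows S₂ S₁

/-- `x` is the root of the subtree `S`: a node of `S` of minimum depth. -/
def HostTree.IsSubtreeRoot (T : HostTree) (S : Set T.V) (x : T.V) : Prop :=
  x ∈ S ∧ ∀ y ∈ S, T.depth x ≤ T.depth y

/-- The closed neighbourhood `N[v]` of a vertex. -/
def closedNbhd {α : Type*} (G : SimpleGraph α) (v : α) : Set α :=
  insert v (G.neighborSet v)

/-- A tree representation of `G`: a subtree `t v` of the host tree for every
vertex `v`, such that distinct vertices are adjacent iff their subtrees meet. -/
def IsTreeRep {α : Type*} (G : SimpleGraph α) (T : HostTree) (t : α → Set T.V) : Prop :=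
  (∀ v : α, T.IsSubtree (t v)) ∧
  ∀ u v : α, u ≠ v → (G.Adj u v ↔ (t u ∩ t v).Nonempty)

/-- A compatible tree representation: a tree representation all of whose
subtrees are pairwise compatible. -/
def IsCompatibleTreeRep {α : Type*} (G : SimpleGraph α) (T : HostTree)
    (t : α → Set T.V) : Prop :=
  IsTreeRep G T t ∧ ∀ u v : α, T.CompatiblePair (t u) (t v)

/-- A strong elimination order. -/
def IsStrongElimOrder {α : Type*} (G : SimpleGraph α) {n : ℕ} (σ : Fin n ≃ α) : Prop :=
  ∀ i j k l : Fin n, i < j → k < l →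
    σ k ∈ closedNbhd G (σ i) → σ l ∈ closedNbhd G (σ i) →
    σ k ∈ closedNbhd G (σ j) → σ l ∈ closedNbhd G (σ j)

/-- A downward path in the host tree: a subtree any two of whose nodes are
comparable (one lies on the unique root-path of the other). -/
def HostTree.IsDownwardPath (T : HostTree) (S : Set T.V) : Prop :=
  T.IsSubtree S ∧
  ∀ x ∈ S, ∀ y ∈ S, x ∈ (T.rootPath y).support ∨ y ∈ (T.rootPath x).support

noncomputable instance (T : HostTree) : DecidableEq T.V := Classical.decEq _

namespace HostTree
open SimpleGraph Walk
variable (T : HostTree)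

lemma rootPath_isPath (x : T.V) : (T.rootPath x).IsPath :=
  (T.isTree.existsUnique_path T.root x).choose_spec.1

lemma rootPath_unique {x : T.V} (p : T.G.Walk T.root x) (hp : p.IsPath) :
    p = T.rootPath x :=
  (T.isTree.existsUnique_path T.root x).choose_spec.2 p hp

/-- ancestor relation -/
def Anc (x y : T.V) : Prop := x ∈ (T.rootPath y).support

lemma anc_refl (x : T.V) : T.Anc x x := Walk.end_mem_support _

lemma rootPath_eq_takeUntil {x y : T.V} (h : T.Anc x y) :
    T.rootPath x = (T.rootPath y).takeUntil x h :=
  (T.rootPath_unique _ ((T.rootPath_isPath y).takeUntil h)).symm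

lemma anc_trans {x y z : T.V} (hxy : T.Anc x y) (hyz : T.Anc y z) : T.Anc x z := by
  unfold Anc at hxy
  rw [T.rootPath_eq_takeUntil hyz] at hxy
  exact (T.rootPath z).support_takeUntil_subset hyz hxy

lemma depth_le_of_anc {x y : T.V} (h : T.Anc x y) : T.depth x ≤ T.depth y := by
  have hs := (T.rootPath y).take_spec h
  have : T.depth y = T.depth x +
      (((T.rootPath y).dropUntil x h).darts.map (fun d => T.w d.toProd.1 d.toProd.2)).sum := by
    rw [depth, depth, T.rootPath_eq_takeUntil h, ← List.sum_append, ← List.map_append,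
      ← Walk.darts_append, hs]
  rw [this]
  have : 0 ≤ (((T.rootPath y).dropUntil x h).darts.map (fun d => T.w d.toProd.1 d.toProd.2)).sum := by
    apply List.sum_nonneg
    intro a ha
    obtain ⟨d, _, rfl⟩ := List.mem_map.mp ha
    exact le_of_lt (T.w_pos _ _ d.adj)
  linarith

lemma depth_lt_of_anc {x y : T.V} (h : T.Anc x y) (hne : x ≠ y) : T.depth x < T.depth y := by
  have hs := (T.rootPath y).take_spec h
  have heq : T.depth y = T.depth x +
      (((T.rootPath y).dropUntil x h).darts.map (fun d => T.w d.toProd.1 d.toProd.2)).sum := by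
    rw [depth, depth, T.rootPath_eq_takeUntil h, ← List.sum_append, ← List.map_append,
      ← Walk.darts_append, hs]
  have hpos : 0 < (((T.rootPath y).dropUntil x h).darts.map (fun d => T.w d.toProd.1 d.toProd.2)).sum := by
    apply List.sum_pos
    · intro a ha
      obtain ⟨d, _, rfl⟩ := List.mem_map.mp ha
      exact T.w_pos _ _ d.adj
    · cases hq : (T.rootPath y).dropUntil x h with
      | nil => exact absurd rfl hne
      | cons h' q => simp
  linarith

lemma anc_antisymm {x y : T.V} (hxy : T.Anc x y) (hyx : T.Anc y x) : x = y := by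
  by_contra hne
  exact absurd (T.depth_lt_of_anc hyx (Ne.symm hne)) (not_lt.mpr (T.depth_le_of_anc hxy))

lemma anc_of_comp_le {x y : T.V} (hcomp : T.Anc x y ∨ T.Anc y x)
    (hle : T.depth x ≤ T.depth y) : T.Anc x y := by
  rcases hcomp with h | h
  · exact h
  · rcases eq_or_ne y x with rfl | hne
    · exact h
    · exact absurd (T.depth_lt_of_anc h hne) (not_lt.mpr hle)

lemma anc_total {x y z : T.V} (hx : T.Anc x z) (hy : T.Anc y z) :
    T.Anc x y ∨ T.Anc y x := by
  unfold Anc at hx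
  rw [← (T.rootPath z).take_spec hy, Walk.mem_support_append_iff] at hx
  rcases hx with hx | hx
  · left
    unfold Anc
    rwa [T.rootPath_eq_takeUntil hy]
  · right
    -- x ∈ support of dropUntil y; build path root → y → x
    set q := (T.rootPath z).dropUntil y hy with hqdef
    have hxq : x ∈ q.support := hx
    have hpath : ((T.rootPath y).append (q.takeUntil x hxq)).IsPath := by
      have h1 : (((T.rootPath y).append (q.takeUntil x hxq)).append (q.dropUntil x hxq)).IsPath := by
        rw [← Walk.append_assoc, q.take_spec hxq, T.rootPath_eq_takeUntil hy,
          (T.rootPath z).take_spec hy]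
        exact T.rootPath_isPath z
      exact h1.of_append_left
    have := T.rootPath_unique _ hpath
    unfold Anc
    rw [← this, Walk.mem_support_append_iff]
    left
    exact Walk.end_mem_support _


/-- membership of in-between nodes in a connected set -/
lemma mem_of_between {S : Set T.V} (hne : S.Nonempty) (hconn : (T.G.induce S).Connected)
    {u v w : T.V} (hu : u ∈ S) (hw : w ∈ S) (huv : T.Anc u v) (hvw : T.Anc v w) : v ∈ S := by
  have huw : T.Anc u w := T.anc_trans huv hvw
  -- canonical path from u to w
  set q := (T.rootPath w).dropUntil u huw with hqdef
  have hq : q.IsPath := (T.rootPath_isPath w).dropUntil huw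
  have hvq : v ∈ q.support := by
    have hv : v ∈ (T.rootPath w).support := hvw
    rw [← (T.rootPath w).take_spec huw, Walk.mem_support_append_iff] at hv
    rcases hv with hv | hv
    · rw [← T.rootPath_eq_takeUntil huw] at hv
      have : v = u := T.anc_antisymm hv huv
      rw [this]
      exact Walk.start_mem_support _
    · exact hv
  -- a walk from u to w inside S
  obtain ⟨W⟩ := hconn.preconnected ⟨u, hu⟩ ⟨w, hw⟩
  let f : T.G.induce S →g T.G := ⟨Subtype.val, fun h => h⟩
  let W' : T.G.Walk u w := (W.map f).copy rfl rfl
  have hWsup : ∀ x ∈ W'.support, x ∈ S := by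
    intro x hx
    rw [Walk.support_copy, Walk.support_map] at hx
    obtain ⟨a, _, rfl⟩ := List.mem_map.mp hx
    exact a.2
  have hp : (W'.toPath : T.G.Walk u w).IsPath := W'.toPath.2
  have : (W'.toPath : T.G.Walk u w) = q :=
    ((T.isTree.existsUnique_path u w).unique hp hq)
  have hvp : v ∈ (W'.toPath : T.G.Walk u w).support := by rw [this]; exact hvq
  exact hWsup v (W'.support_toPath_subset hvp)

lemma root_anc_mem {S : Set T.V} (hdp : T.IsDownwardPath S) {r x : T.V}
    (hr : T.IsSubtreeRoot S r) (hx : x ∈ S) : T.Anc r x :=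
  T.anc_of_comp_le (hdp.2 r hr.1 x hx) (hr.2 x hx)

/-- the key claim: if downward paths P and Q intersect and the root of P is at
least as deep as the root of Q, then the root of P belongs to Q. -/
lemma claimC {P Q : Set T.V} (hP : T.IsDownwardPath P) (hQ : T.IsDownwardPath Q)
    {p q : T.V} (hp : T.IsSubtreeRoot P p) (hq : T.IsSubtreeRoot Q q)
    {x : T.V} (hxP : x ∈ P) (hxQ : x ∈ Q) (hle : T.depth q ≤ T.depth p) : p ∈ Q := by
  have hpx : T.Anc p x := T.root_anc_mem hP hp hxP
  have hqx : T.Anc q x := T.root_anc_mem hQ hq hxQ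
  have hqp : T.Anc q p := T.anc_of_comp_le (T.anc_total hqx hpx) hle
  exact T.mem_of_between hQ.1.1 hQ.1.2 hq.1 hxQ hqp hpx

/-- main combinatorial lemma -/
lemma main_lemma {Pi Pj Pk Pl : Set T.V}
    (hPi : T.IsDownwardPath Pi) (hPj : T.IsDownwardPath Pj)
    (hPk : T.IsDownwardPath Pk) (hPl : T.IsDownwardPath Pl)
    {ri rj rk rl : T.V}
    (hri : T.IsSubtreeRoot Pi ri) (hrj : T.IsSubtreeRoot Pj rj)
    (hrk : T.IsSubtreeRoot Pk rk) (hrl : T.IsSubtreeRoot Pl rl)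
    (hij : T.depth rj ≤ T.depth ri) (hkl : T.depth rl ≤ T.depth rk)
    (hki : (Pk ∩ Pi).Nonempty) (hli : (Pl ∩ Pi).Nonempty)
    (hkj : (Pk ∩ Pj).Nonempty) : (Pl ∩ Pj).Nonempty := by
  obtain ⟨xki, hxkiK, hxkiI⟩ := hki
  obtain ⟨xli, hxliL, hxliI⟩ := hli
  obtain ⟨xkj, hxkjK, hxkjJ⟩ := hkj
  rcases le_total (T.depth ri) (T.depth rl) with h1 | h1
  · -- Case 1 : depth ri ≤ depth rl
    have hliI : rl ∈ Pi := T.claimC hPl hPi hrl hri hxliL hxliI h1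
    have hkiI : rk ∈ Pi := T.claimC hPk hPi hrk hri hxkiK hxkiI (h1.trans hkl)
    have hkjJ : rk ∈ Pj := T.claimC hPk hPj hrk hrj hxkjK hxkjJ (hij.trans (h1.trans hkl))
    have hAlk : T.Anc rl rk := T.anc_of_comp_le (hPi.2 rl hliI rk hkiI) hkl
    have hAjk : T.Anc rj rk := T.root_anc_mem hPj hrj hkjJ
    have hAjl : T.Anc rj rl := T.anc_of_comp_le (T.anc_total hAjk hAlk) (hij.trans h1)
    exact ⟨rl, hrl.1, T.mem_of_between hPj.1.1 hPj.1.2 hrj.1 hkjJ hAjl hAlk⟩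
  · -- Case 2 : depth rl ≤ depth ri
    have hiL : ri ∈ Pl := T.claimC hPi hPl hri hrl hxliI hxliL h1
    have hAli : T.Anc rl ri := T.root_anc_mem hPl hrl hiL
    rcases le_total (T.depth rj) (T.depth rk) with h2 | h2
    · -- Subcase 2a : depth rj ≤ depth rk
      have hkJ : rk ∈ Pj := T.claimC hPk hPj hrk hrj hxkjK hxkjJ h2
      have hAjk : T.Anc rj rk := T.root_anc_mem hPj hrj hkJ
      rcases le_total (T.depth ri) (T.depth rk) with h3 | h3
      · -- depth ri ≤ depth rk
        have hkI : rk ∈ Pi := T.claimC hPk hPi hrk hri hxkiK hxkiI h3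
        have hAik : T.Anc ri rk := T.root_anc_mem hPi hri hkI
        have hAji : T.Anc rj ri := T.anc_of_comp_le (T.anc_total hAjk hAik) hij
        exact ⟨ri, hiL, T.mem_of_between hPj.1.1 hPj.1.2 hrj.1 hkJ hAji hAik⟩
      · -- depth rk ≤ depth ri
        have hiK : ri ∈ Pk := T.claimC hPi hPk hri hrk hxkiI hxkiK h3
        have hAki : T.Anc rk ri := T.root_anc_mem hPk hrk hiK
        have hAlk : T.Anc rl rk := T.anc_of_comp_le (T.anc_total hAli hAki) hkl
        rcases le_total (T.depth rj) (T.depth rl) with h4 | h4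
        · have hAjl : T.Anc rj rl := T.anc_of_comp_le (T.anc_total hAjk hAlk) h4
          exact ⟨rl, hrl.1, T.mem_of_between hPj.1.1 hPj.1.2 hrj.1 hkJ hAjl hAlk⟩
        · have hAji : T.Anc rj ri := T.anc_trans hAjk hAki
          have hAlj : T.Anc rl rj := T.anc_of_comp_le (T.anc_total hAli hAji) h4
          exact ⟨rj, T.mem_of_between hPl.1.1 hPl.1.2 hrl.1 hiL hAlj hAji, hrj.1⟩
    · -- Subcase 2b : depth rk ≤ depth rj
      have hjK : rj ∈ Pk := T.claimC hPj hPk hrj hrk hxkjJ hxkjK h2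
      have hiK : ri ∈ Pk := T.claimC hPi hPk hri hrk hxkiI hxkiK (h2.trans hij)
      have hAji : T.Anc rj ri := T.anc_of_comp_le (hPk.2 rj hjK ri hiK) hij
      have hAlj : T.Anc rl rj := T.anc_of_comp_le (T.anc_total hAli hAji) (hkl.trans h2)
      exact ⟨rj, T.mem_of_between hPl.1.1 hPl.1.2 hrl.1 hiL hAlj hAji, hrj.1⟩

end HostTree

/-- In a tree representation by downward paths, every enumeration of the
vertices by non-increasing root depth is a strong elimination order. -/
theorem rdv_bottom_up_strongElimOrder {α : Type} [Fintype α]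
    (G : SimpleGraph α) (T : HostTree) (t : α → Set T.V) (h : IsTreeRep G T t)
    (hdp : ∀ v : α, T.IsDownwardPath (t v))
    (rt : α → T.V) (hrt : ∀ v : α, T.IsSubtreeRoot (t v) (rt v))
    {n : ℕ} (σ : Fin n ≃ α)
    (hmono : ∀ i j : Fin n, i ≤ j → T.depth (rt (σ j)) ≤ T.depth (rt (σ i))) :
    IsStrongElimOrder G σ := by
  have hnbhd : ∀ u v : α, u ∈ closedNbhd G v ↔ (t u ∩ t v).Nonempty := by
    intro u v
    rw [closedNbhd, Set.mem_insert_iff]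
    constructor
    · rintro (rfl | hadj)
      · rw [Set.inter_self]
        exact (h.1 u).1
      · exact ((h.2 u v (G.ne_of_adj hadj).symm).mp hadj.symm)
    · intro hne
      rcases eq_or_ne u v with rfl | huv
      · exact Or.inl rfl
      · exact Or.inr ((h.2 u v huv).mpr hne).symm
  intro i j k l hij hkl hk hl hk'
  rw [hnbhd] at hk hl hk' ⊢
  exact T.main_lemma (hdp (σ i)) (hdp (σ j)) (hdp (σ k)) (hdp (σ l))
    (hrt (σ i)) (hrt (σ j)) (hrt (σ k)) (hrt (σ l))
    (hmono i j hij.le) (hmono k l hkl.le) hk hl hk'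
end

section
/- Let {T(v)} be a tree representation of a finite simple graph G in which every subtree T(v) is a downward path in the host tree. Then for any two vertices v,w with d(𝐯) ≤ d(𝐰), the subtree T(v) overshadows T(w); in particular, the tree representation is compatible. -/
section Aux
variable (T : HostTree)

lemma HostTree.rootPath_isPath_s10 (x : T.V) : (T.rootPath x).IsPath :=
  (T.isTree.existsUnique_path T.root x).choose_spec.1

lemma HostTree.path_unique {a b : T.V} {p q : T.G.Walk a b}
    (hp : p.IsPath) (hq : q.IsPath) : p = q :=
  (T.isTree.existsUnique_path a b).unique hp hq

lemma HostTree.depth_lt_of_mem_support {x y : T.V}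
    (hx : x ∈ (T.rootPath y).support) (hxy : x ≠ y) :
    T.depth x < T.depth y := by
  classical
  set p := T.rootPath y with hp
  have hsplit := p.take_spec hx
  have hq : (p.takeUntil x hx) = T.rootPath x :=
    T.path_unique ((T.rootPath_isPath_s10 y).takeUntil hx) (T.rootPath_isPath_s10 x)
  have hdy : T.depth y =
      ((p.takeUntil x hx).darts.map (fun d => T.w d.toProd.1 d.toProd.2)).sum +
      ((p.dropUntil x hx).darts.map (fun d => T.w d.toProd.1 d.toProd.2)).sum := by
    have h2 := congrArg
      (fun q : T.G.Walk T.root y => (q.darts.map (fun d => T.w d.toProd.1 d.toProd.2)).sum)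
      hsplit
    simp only [SimpleGraph.Walk.darts_append, List.map_append, List.sum_append] at h2
    rw [HostTree.depth]
    exact h2.symm
  have hdx : T.depth x =
      ((p.takeUntil x hx).darts.map (fun d => T.w d.toProd.1 d.toProd.2)).sum := by
    rw [HostTree.depth, hq]
  rw [hdy, hdx]
  have hpos : 0 < ((p.dropUntil x hx).darts.map
      (fun d => T.w d.toProd.1 d.toProd.2)).sum := by
    apply List.sum_pos
    · intro r hr
      simp only [List.mem_map] at hr
      obtain ⟨d, _, rfl⟩ := hr
      exact T.w_pos _ _ d.adj
    · intro hnil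
      apply hxy
      apply SimpleGraph.Walk.eq_of_length_eq_zero (p := p.dropUntil x hx)
      rw [← (p.dropUntil x hx).length_darts, List.map_eq_nil_iff.mp hnil]
      rfl
  linarith

lemma HostTree.depth_le_of_mem_support {x y : T.V}
    (hx : x ∈ (T.rootPath y).support) : T.depth x ≤ T.depth y := by
  rcases eq_or_ne x y with rfl | h
  · exact le_refl _
  · exact (T.depth_lt_of_mem_support hx h).le

lemma HostTree.mem_of_path_in_subtree {S : Set T.V} (hS : T.IsSubtree S)
    {a b : T.V} (ha : a ∈ S) (hb : b ∈ S) (p : T.G.Walk a b) (hp : p.IsPath) :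
    ∀ z ∈ p.support, z ∈ S := by
  classical
  obtain ⟨w⟩ := hS.2 ⟨a, ha⟩ ⟨b, hb⟩
  have hw : p = (w.map (SimpleGraph.Embedding.induce S).toHom).bypass :=
    T.path_unique hp (SimpleGraph.Walk.bypass_isPath _)
  intro z hz
  rw [hw] at hz
  have hz' := (w.map (SimpleGraph.Embedding.induce S).toHom).support_bypass_subset hz
  rw [SimpleGraph.Walk.support_map, List.mem_map] at hz'
  obtain ⟨⟨z', hz'S⟩, _, rfl⟩ := hz'
  exact hz'S

end Aux

/-- In a tree representation by downward paths, if `d(𝐯) ≤ d(𝐰)` then `T(v)`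
overshadows `T(w)`; in particular the representation is compatible. -/
theorem rdv_overshadows {α : Type} [Fintype α]
    (G : SimpleGraph α) (T : HostTree) (t : α → Set T.V) (h : IsTreeRep G T t)
    (hdp : ∀ v : α, T.IsDownwardPath (t v))
    (rt : α → T.V) (hrt : ∀ v : α, T.IsSubtreeRoot (t v) (rt v)) :
    (∀ v w : α, T.depth (rt v) ≤ T.depth (rt w) → T.Overshadows (t v) (t w)) ∧
    (∀ u v : α, T.CompatiblePair (t u) (t v)) := by
  have key : ∀ v w : α, T.depth (rt v) ≤ T.depth (rt w) →
      T.Overshadows (t v) (t w) := by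
    classical
    intro v w hle x hx y hy
    obtain ⟨hxw, hxv⟩ := hx
    obtain ⟨hyw, hyv⟩ := hy
    have hxy : x ≠ y := fun he => hxv (he ▸ hyv)
    -- x and y are both in t w, a downward path, so they are comparable
    rcases (hdp w).2 y hyw x hxw with hyx | hxy'
    · -- y on the root path of x : done
      exact T.depth_lt_of_mem_support hyx (fun he => hxv (he ▸ hyv))
    · -- x on the root path of y : derive a contradiction
      exfalso
      -- rt v lies on the root path of y
      have hrv : rt v ∈ (T.rootPath y).support := by
        rcases (hdp v).2 (rt v) (hrt v).1 y hyv with h1 | h2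
        · exact h1
        · -- y on root path of rt v forces y = rt v
          rcases eq_or_ne y (rt v) with rfl | hne
          · exact SimpleGraph.Walk.end_mem_support _
          · exact absurd (T.depth_lt_of_mem_support h2 hne)
              (not_lt.mpr ((hrt v).2 y hyv))
      -- split the root path of y at rt v
      have hsplit := (T.rootPath y).take_spec hrv
      have hxmem : x ∈ ((T.rootPath y).takeUntil (rt v) hrv).support ∨
          x ∈ ((T.rootPath y).dropUntil (rt v) hrv).support := by
        rw [← SimpleGraph.Walk.mem_support_append_iff, hsplit]
        exact hxy'
      rcases hxmem with h1 | h2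
      · -- x is a strict ancestor of rt v, contradicting depth minimality
        have htu : ((T.rootPath y).takeUntil (rt v) hrv) = T.rootPath (rt v) :=
          T.path_unique ((T.rootPath_isPath_s10 y).takeUntil hrv) (T.rootPath_isPath_s10 (rt v))
        rw [htu] at h1
        have hxne : x ≠ rt v := fun he => hxv (he ▸ (hrt v).1)
        have h3 : T.depth x < T.depth (rt v) := T.depth_lt_of_mem_support h1 hxne
        have h4 : T.depth (rt w) ≤ T.depth x := (hrt w).2 x hxw
        linarith
      · -- x lies on the path from rt v to y, which sits inside t v
        apply hxv
        exact T.mem_of_path_in_subtree (hdp v).1 (hrt v).1 hyv _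
          ((T.rootPath_isPath_s10 y).dropUntil hrv) x h2
  refine ⟨key, fun u v => ?_⟩
  rcases le_total (T.depth (rt u)) (T.depth (rt v)) with hle | hle
  · exact Or.inl (key u v hle)
  · exact Or.inr (key v u hle)
end
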